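/- Let w ∈ S_n viewed as a word and let 1 ≤ i < j ≤ n. Then ji is a factor of w (i.e., j immediately followed by i) if and only if: (i) γ_{ij}(w) = 1; (ii) γ_{ip}(w) + γ_{pj}(w) = 1 for all i < p < j; (iii) γ_{pi}(w) = γ_{pj}(w) for all 1 ≤ p < i; (iv) γ_{ip}(w) = γ_{jp}(w) for all j < p ≤ n. -/

import Mathlib

/-- `gamma w i j = 1` if `j` appears before `i` in the word `w`, else `0`. -/
def gamma (w : List ℕ) (i j : ℕ) : ℤ := if w.idxOf j < w.idxOf i then 1 else 0

theorem factor_iff_gamma (n : ℕ) (w : List ℕ) (hperm : w.Perm (List.range' 1 n))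
    (i j : ℕ) (hi : 1 ≤ i) (hij : i < j) (hj : j ≤ n) :
    [j, i] <:+: w ↔
      (gamma w i j = 1 ∧
       (∀ p, i < p → p < j → gamma w i p + gamma w p j = 1) ∧
       (∀ p, 1 ≤ p → p < i → gamma w p i = gamma w p j) ∧
       (∀ p, j < p → p ≤ n → gamma w i p = gamma w j p)) := by
  have hnd : w.Nodup := hperm.nodup_iff.mpr (List.nodup_range' ..)
  have hmemw : ∀ p, 1 ≤ p → p ≤ n → p ∈ w := by
    intro p h1 h2
    rw [hperm.mem_iff, List.mem_range'_1]
    omega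
  have hiw : i ∈ w := hmemw i hi (by omega)
  have hjw : j ∈ w := hmemw j (by omega) hj
  have hmemn : ∀ p ∈ w, 1 ≤ p ∧ p ≤ n := by
    intro p hp
    rw [hperm.mem_iff, List.mem_range'_1] at hp
    omega
  have hia := List.idxOf_lt_length_iff.mpr hiw
  have hja := List.idxOf_lt_length_iff.mpr hjw
  have hinj : ∀ p ∈ w, ∀ q ∈ w, p ≠ q → w.idxOf p ≠ w.idxOf q := by
    intro p hp q hq hne h
    exact hne ((List.idxOf_inj hp).mp h)
  constructor
  · rintro ⟨s, t, rfl⟩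
    have hlen : s.length + 1 < (s ++ [j, i] ++ t).length := by simp
    have hq1 : (s ++ [j, i] ++ t)[s.length]? = some j := by
      rw [List.append_assoc, List.getElem?_append_right (le_refl s.length)]
      simp
    have hq2 : (s ++ [j, i] ++ t)[s.length + 1]? = some i := by
      rw [List.append_assoc, List.getElem?_append_right (by omega)]
      simp
    have hgj : (s ++ [j, i] ++ t)[s.length]'(by omega) = j :=
      Option.some.inj ((List.getElem?_eq_getElem (by omega)).symm.trans hq1)
    have hgi : (s ++ [j, i] ++ t)[s.length + 1]'hlen = i :=
      Option.some.inj ((List.getElem?_eq_getElem hlen).symm.trans hq2)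
    have hbj : (s ++ [j, i] ++ t).idxOf j = s.length := by
      have h := List.Nodup.idxOf_getElem hnd s.length (by omega)
      rwa [hgj] at h
    have hbi : (s ++ [j, i] ++ t).idxOf i = s.length + 1 := by
      have h := List.Nodup.idxOf_getElem hnd (s.length + 1) hlen
      rwa [hgi] at h
    have hsep : ∀ p, 1 ≤ p → p ≤ n → p ≠ i → p ≠ j →
        (s ++ [j, i] ++ t).idxOf p < s.length ∨
          s.length + 1 < (s ++ [j, i] ++ t).idxOf p := by
      intro p h1 h2 hpi hpj
      have hpw := hmemw p h1 h2
      have h3 := hinj p hpw i hiw hpi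
      have h4 := hinj p hpw j hjw hpj
      omega
    refine ⟨?_, ?_, ?_, ?_⟩
    · simp only [gamma, hbj, hbi]
      norm_num
    · intro p hp1 hp2
      have := hsep p (by omega) (by omega) (by omega) (by omega)
      simp only [gamma, hbj, hbi]
      split_ifs <;> omega
    · intro p hp1 hp2
      have := hsep p (by omega) (by omega) (by omega) (by omega)
      simp only [gamma, hbj, hbi]
      split_ifs <;> omega
    · intro p hp1 hp2
      have := hsep p (by omega) (by omega) (by omega) (by omega)
      simp only [gamma, hbj, hbi]
      split_ifs <;> omega
  · rintro ⟨h1, h2, h3, h4⟩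
    simp only [gamma] at h1
    have hba : w.idxOf j < w.idxOf i := by
      by_contra h; simp [h] at h1
    have hadj : w.idxOf i = w.idxOf j + 1 := by
      by_contra hne
      have hlt : w.idxOf j + 1 < w.idxOf i := by omega
      set k := w.idxOf j + 1 with hk
      have hkl : k < w.length := by omega
      set q := w[k] with hq
      have hqw : q ∈ w := List.getElem_mem hkl
      have hqn := hmemn q hqw
      have hqidx : w.idxOf q = k := List.Nodup.idxOf_getElem hnd _ _
      have hqi : q ≠ i := by
        intro h; rw [h] at hqidx; omega
      have hqj : q ≠ j := by
        intro h; rw [h] at hqidx; omega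
      rcases lt_trichotomy q i with hc | hc | hc
      · have := h3 q (by omega) hc
        simp only [gamma, hqidx] at this
        split_ifs at this <;> omega
      · exact hqi hc
      · rcases lt_trichotomy q j with hd | hd | hd
        · have := h2 q hc hd
          simp only [gamma, hqidx] at this
          split_ifs at this <;> omega
        · exact hqj hd
        · have := h4 q hd (by omega)
          simp only [gamma, hqidx] at this
          split_ifs at this <;> omega
    refine ⟨w.take (w.idxOf j), w.drop (w.idxOf j + 2), ?_⟩
    have e1 : w.drop (w.idxOf j) = j :: w.drop (w.idxOf j + 1) := by
      rw [List.drop_eq_getElem_cons hja]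
      congr 1
      exact List.getElem_idxOf hja
    have h5 : w[w.idxOf j + 1]? = some i := by
      rw [← hadj, List.getElem?_eq_getElem hia, List.getElem_idxOf hia]
    have e2 : w.drop (w.idxOf j + 1) = i :: w.drop (w.idxOf j + 2) := by
      rw [List.drop_eq_getElem_cons (by omega : w.idxOf j + 1 < w.length)]
      congr 1
      exact Option.some.inj ((List.getElem?_eq_getElem (by omega)).symm.trans h5)
    calc w.take (w.idxOf j) ++ [j, i] ++ w.drop (w.idxOf j + 2)
        = w.take (w.idxOf j) ++ w.drop (w.idxOf j) := by
          rw [e1, e2]; simp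
      _ = w := List.take_append_drop _ _
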